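/- Robust rejection sampling produces an output distribution close to the target: Let p₁, p₂ be probability distributions on {1,…,n}, m > 0 with p₁(j) ≤ m·p₂(j) for all j, and let p̃₂ be a distribution with ‖p̃₂ − p₂‖_TV ≤ ε where ε ∈ [0, 1/(2m)]. Define the acceptance probability p_acc = Σⱼ p̃₂(j)·p₁(j)/(m p₂(j)). Then |p_acc − 1/m| ≤ ε, hence p_acc ∈ [(1−εm)/m, (1+εm)/m], and the conditional output distribution p̂(j) = p̃₂(j)p₁(j)/(m·p_acc·p₂(j)) satisfies ‖p̂ − p₁‖_TV ≤ 3εm. -/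

import Mathlib

open Finset

set_option maxHeartbeats 1000000

/-- **Robust rejection sampling.**
Let `p₁, p₂` be probability distributions on `{1,…,n}`, `m > 0` with `p₁(j) ≤ m·p₂(j)` for
all `j`, and let `p̃₂` be a distribution with `‖p̃₂ − p₂‖_TV ≤ ε`, where `ε ∈ [0, 1/(2m)]`.
With acceptance probability `p_acc = Σⱼ p̃₂(j)·p₁(j)/(m p₂(j))` one has `|p_acc − 1/m| ≤ ε`,
hence `p_acc ∈ [(1−εm)/m, (1+εm)/m]`, and the conditional output distribution
`p̂(j) = p̃₂(j)p₁(j)/(m·p_acc·p₂(j))` satisfies `‖p̂ − p₁‖_TV ≤ 3εm`.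
(Ratios with vanishing denominators are `0` by Lean's convention; this matches the paper's
convention since `p₂(j) = 0` forces `p₁(j) = 0`.) -/
theorem robust_rejection_sampling
    (n : ℕ) (p₁ p₂ ptilde₂ : Fin n → ℝ)
    (hp₁_nonneg : ∀ j, 0 ≤ p₁ j) (hp₁_sum : ∑ j, p₁ j = 1)
    (hp₂_nonneg : ∀ j, 0 ≤ p₂ j) (hp₂_sum : ∑ j, p₂ j = 1)
    (hpt_nonneg : ∀ j, 0 ≤ ptilde₂ j) (hpt_sum : ∑ j, ptilde₂ j = 1)
    (m : ℝ) (hm : 0 < m) (hdom : ∀ j, p₁ j ≤ m * p₂ j)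
    (ε : ℝ) (hε : ε ∈ Set.Icc 0 (1/(2*m)))
    (hTV : (1/2) * ∑ j, |ptilde₂ j - p₂ j| ≤ ε)
    (pacc : ℝ) (hpacc : pacc = ∑ j, ptilde₂ j * (p₁ j / (m * p₂ j))) :
    |pacc - 1/m| ≤ ε ∧
    pacc ∈ Set.Icc ((1 - ε*m)/m) ((1 + ε*m)/m) ∧
    (1/2) * ∑ j, |ptilde₂ j * p₁ j / (m * pacc * p₂ j) - p₁ j| ≤ 3 * ε * m := by
  obtain ⟨hε0, hεm⟩ := hε
  have hmm : m * (1/m) = 1 := by field_simp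
  have hεm' : ε * m ≤ 1/2 := by
    have h := mul_le_mul_of_nonneg_right hεm hm.le
    have h2 : 1/(2*m)*m = 1/2 := by field_simp
    linarith
  have hr0 : ∀ j, 0 ≤ p₁ j / (m * p₂ j) := fun j =>
    div_nonneg (hp₁_nonneg j) (mul_nonneg hm.le (hp₂_nonneg j))
  have hr1 : ∀ j, p₁ j / (m * p₂ j) ≤ 1 := by
    intro j
    rcases eq_or_lt_of_le (hp₂_nonneg j) with h | h
    · rw [← h, mul_zero, div_zero]; norm_num
    · exact (div_le_one (by positivity)).mpr (hdom j)
  have hp1r : ∀ j, p₁ j = m * p₂ j * (p₁ j / (m * p₂ j)) := by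
    intro j
    rcases eq_or_lt_of_le (hp₂_nonneg j) with h | h
    · have h1 : p₁ j = 0 := le_antisymm (by have := hdom j; rw [← h] at this; linarith)
        (hp₁_nonneg j)
      rw [h1, ← h]; ring
    · have hne : m * p₂ j ≠ 0 := by positivity
      rw [mul_comm (m * p₂ j), div_mul_cancel₀ _ hne]
  have hsum_pr : ∑ j, p₂ j * (p₁ j / (m * p₂ j)) = 1/m := by
    have h1 : (1:ℝ) = m * ∑ j, p₂ j * (p₁ j / (m * p₂ j)) := by
      rw [← hp₁_sum, Finset.mul_sum]
      exact Finset.sum_congr rfl fun j _ => (hp1r j).trans (mul_assoc m (p₂ j) _)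
    rw [eq_div_iff hm.ne']; linarith
  have hdiffsum : ∑ j, (ptilde₂ j - p₂ j) = 0 := by
    rw [Finset.sum_sub_distrib, hpt_sum, hp₂_sum]; ring
  have habsle : ∑ j, |ptilde₂ j - p₂ j| ≤ 2 * ε := by linarith
  have hpacc_eq : pacc - 1/m = ∑ j, (ptilde₂ j - p₂ j) * (p₁ j / (m * p₂ j)) := by
    rw [hpacc, ← hsum_pr, ← Finset.sum_sub_distrib]
    exact Finset.sum_congr rfl fun j _ => by ring
  have h1 : |pacc - 1/m| ≤ ε := by
    have hshift : pacc - 1/m = ∑ j, (ptilde₂ j - p₂ j) * (p₁ j / (m * p₂ j) - 1/2) := by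
      rw [hpacc_eq]
      have hexp : ∑ j, (ptilde₂ j - p₂ j) * (p₁ j / (m * p₂ j) - 1/2)
          = ∑ j, (ptilde₂ j - p₂ j) * (p₁ j / (m * p₂ j))
            - (∑ j, (ptilde₂ j - p₂ j)) * (1/2) := by
        rw [Finset.sum_mul, ← Finset.sum_sub_distrib]
        exact Finset.sum_congr rfl fun j _ => by ring
      rw [hexp, hdiffsum]; ring
    rw [hshift]
    calc |∑ j, (ptilde₂ j - p₂ j) * (p₁ j / (m * p₂ j) - 1/2)|
        ≤ ∑ j, |(ptilde₂ j - p₂ j) * (p₁ j / (m * p₂ j) - 1/2)| :=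
          Finset.abs_sum_le_sum_abs _ _
      _ ≤ ∑ j, |ptilde₂ j - p₂ j| * (1/2) := by
          refine Finset.sum_le_sum fun j _ => ?_
          rw [abs_mul]
          refine mul_le_mul_of_nonneg_left ?_ (abs_nonneg _)
          rw [abs_le]
          constructor <;> [linarith [hr0 j]; linarith [hr1 j]]
      _ = (1/2) * ∑ j, |ptilde₂ j - p₂ j| := by rw [← Finset.sum_mul]; ring
      _ ≤ ε := hTV
  refine ⟨h1, ?_, ?_⟩
  · rw [Set.mem_Icc]
    rw [abs_le] at h1
    constructor
    · rw [div_le_iff₀ hm]; nlinarith [mul_le_mul_of_nonneg_right h1.1 hm.le, hmm]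
    · rw [le_div_iff₀ hm]; nlinarith [mul_le_mul_of_nonneg_right h1.2 hm.le, hmm]
  · rw [abs_le] at h1
    have hpacc_lb : 1/(2*m) ≤ pacc := by
      have h2 : 1/(2*m) ≤ 1/m - ε := by
        rw [le_sub_iff_add_le]
        have hq : 1/(2*m) + 1/(2*m) = 1/m := by rw [← add_div]; rw [div_eq_div_iff (by positivity) hm.ne']; ring
        linarith
      linarith [h1.1]
    have hpacc_pos : 0 < pacc := lt_of_lt_of_le (by positivity) hpacc_lb
    have hC : 1 ≤ 2*m*pacc := by
      rw [div_le_iff₀ (by positivity : (0:ℝ) < 2*m)] at hpacc_lb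
      linarith
    have hA : m * pacc ≤ 1 + ε * m := by nlinarith [mul_le_mul_of_nonneg_left h1.2 hm.le]
    have hB : 1 - ε * m ≤ m * pacc := by nlinarith [mul_le_mul_of_nonneg_left h1.1 hm.le]
    have hinv_ub : 1/pacc ≤ 2*m := by rw [div_le_iff₀ hpacc_pos]; linarith
    have hiu : 1/pacc ≤ m + 2*ε*m^2 := by
      rw [div_le_iff₀ hpacc_pos]
      nlinarith [mul_le_mul_of_nonneg_right hB (by positivity : (0:ℝ) ≤ 1 + 2*ε*m),
        mul_nonneg (mul_nonneg hε0 hm.le) (by linarith : (0:ℝ) ≤ 1 - 2*(ε*m))]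
    have hil : m - 2*ε*m^2 ≤ 1/pacc := by
      rw [le_div_iff₀ hpacc_pos]
      nlinarith [mul_le_mul_of_nonneg_left hC (mul_nonneg hε0 hm.le)]
    have hinvm : |1/pacc - m| ≤ 2*ε*m^2 :=
      abs_le.mpr ⟨by linarith, by linarith⟩
    have hterm : ∀ j ∈ Finset.univ, |ptilde₂ j * p₁ j / (m * pacc * p₂ j) - p₁ j|
        ≤ |ptilde₂ j - p₂ j| * (p₁ j / (m * p₂ j)) / pacc
          + p₂ j * (p₁ j / (m * p₂ j)) * |1/pacc - m| := by
      intro j _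
      have e1 : |(ptilde₂ j - p₂ j) * (p₁ j / (m * p₂ j)) / pacc|
          = |ptilde₂ j - p₂ j| * (p₁ j / (m * p₂ j)) / pacc := by
        rw [abs_div, abs_mul, abs_of_nonneg (hr0 j), abs_of_pos hpacc_pos]
      have e2 : |p₂ j * (p₁ j / (m * p₂ j)) * (1/pacc - m)|
          = p₂ j * (p₁ j / (m * p₂ j)) * |1/pacc - m| := by
        rw [abs_mul, abs_mul, abs_of_nonneg (hp₂_nonneg j), abs_of_nonneg (hr0 j)]
      have key : ptilde₂ j * p₁ j / (m * pacc * p₂ j) - p₁ j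
          = (ptilde₂ j - p₂ j) * (p₁ j / (m * p₂ j)) / pacc
            + p₂ j * (p₁ j / (m * p₂ j)) * (1/pacc - m) := by
        rcases eq_or_lt_of_le (hp₂_nonneg j) with h | h
        · have hp10 : p₁ j = 0 := le_antisymm (by have := hdom j; rw [← h] at this; linarith)
            (hp₁_nonneg j)
          rw [hp10, ← h]
          norm_num
        · have hne : m * p₂ j ≠ 0 := by positivity
          field_simp
          ring
      calc |ptilde₂ j * p₁ j / (m * pacc * p₂ j) - p₁ j|
          ≤ |(ptilde₂ j - p₂ j) * (p₁ j / (m * p₂ j)) / pacc|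
            + |p₂ j * (p₁ j / (m * p₂ j)) * (1/pacc - m)| := by rw [key]; exact abs_add_le _ _
        _ = _ := by rw [e1, e2]
    have hsplit : ∑ j, |ptilde₂ j * p₁ j / (m * pacc * p₂ j) - p₁ j|
        ≤ (∑ j, |ptilde₂ j - p₂ j| * (p₁ j / (m * p₂ j))) / pacc
          + (∑ j, p₂ j * (p₁ j / (m * p₂ j))) * |1/pacc - m| := by
      calc ∑ j, |ptilde₂ j * p₁ j / (m * pacc * p₂ j) - p₁ j|
          ≤ ∑ j, (|ptilde₂ j - p₂ j| * (p₁ j / (m * p₂ j)) / pacc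
            + p₂ j * (p₁ j / (m * p₂ j)) * |1/pacc - m|) := Finset.sum_le_sum hterm
        _ = _ := by rw [Finset.sum_add_distrib, Finset.sum_div, Finset.sum_mul]
    have hs1 : ∑ j, |ptilde₂ j - p₂ j| * (p₁ j / (m * p₂ j)) ≤ 2 * ε :=
      le_trans (Finset.sum_le_sum fun j _ => mul_le_of_le_one_right (abs_nonneg _) (hr1 j)) habsle
    have hS1 : (∑ j, |ptilde₂ j - p₂ j| * (p₁ j / (m * p₂ j))) / pacc ≤ 4 * ε * m := by
      calc (∑ j, |ptilde₂ j - p₂ j| * (p₁ j / (m * p₂ j))) / pacc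
          ≤ (2 * ε) / pacc := by gcongr
        _ = (2 * ε) * (1/pacc) := by rw [div_eq_mul_one_div]
        _ ≤ (2 * ε) * (2 * m) := mul_le_mul_of_nonneg_left hinv_ub (by positivity)
        _ = 4 * ε * m := by ring
    have hS2 : (∑ j, p₂ j * (p₁ j / (m * p₂ j))) * |1/pacc - m| ≤ 2 * ε * m := by
      rw [hsum_pr]
      calc (1/m) * |1/pacc - m| ≤ (1/m) * (2*ε*m^2) :=
            mul_le_mul_of_nonneg_left hinvm (by positivity)
        _ = 2 * ε * m := by field_simp
    linarith
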